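/- Under the RLVR task-selection setup, for every iteration t ≥ 0 the cross-entropy loss L^{(t)} := E_{x_0∼𝒟}[log(1/P_t(f*(x_0) | x_0))] satisfies L^{(t)} ≤ Σ_{s=1}^S R_s^{(t)}, where R_s^{(t)} := 1/P_t(A_{s,τ(s)}) − 1. -/

import Mathlib

open scoped BigOperators RealInnerProductSpace ENNReal

noncomputable section

namespace RLVR

/-- Softmax distribution over a finite vocabulary. -/
def softmax {V : Type*} [Fintype V] (L : V → ℝ) (y : V) : ℝ :=
  Real.exp (L y) / ∑ w, Real.exp (L w)

variable {V : Type*} [Fintype V] [DecidableEq V] [Nonempty V]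
variable {P : Type*} [Fintype P]
variable {J S Bsz : ℕ}

/-- The model logits: `f_θ(x)[v] = Σ_j γ·1[σ_j(x) = v]·⟨h_{s,j}, θ⟩`, where the
positional index `s` records the number of already generated CoT tokens in `x`. -/
def model (γ : ℝ) (σ : Fin J → List V → V)
    (h : Fin S → Fin J → EuclideanSpace ℝ P)
    (θ : EuclideanSpace ℝ P) (s : Fin S) (x : List V) : V → ℝ :=
  fun v => ∑ j : Fin J, (if σ j x = v then γ else 0) * ⟪h s j, θ⟫

/-- The autoregressive policy `π_θ(y | x) = Softmax(f_θ(x))[y]`. -/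
def policy (γ : ℝ) (σ : Fin J → List V → V)
    (h : Fin S → Fin J → EuclideanSpace ℝ P)
    (θ : EuclideanSpace ℝ P) (s : Fin S) (x : List V) (y : V) : ℝ :=
  softmax (model γ σ h θ s x) y

/-- A trajectory: a prompt together with the `S` generated CoT tokens. -/
abbrev Traj (V : Type*) (S : ℕ) := List V × (Fin S → V)

/-- The prefix `x_n`: the prompt followed by the first `n` generated tokens. -/
def pref (ω : Traj V S) (n : ℕ) : List V := ω.1 ++ (List.ofFn ω.2).take n

/-- The full generated string `x_S`. -/
def fullStr (ω : Traj V S) : List V := ω.1 ++ List.ofFn ω.2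

/-- Density of a trajectory under prompt distribution `D` and parameters `θ`. -/
def dens (D : List V → ℝ) (γ : ℝ) (σ : Fin J → List V → V)
    (h : Fin S → Fin J → EuclideanSpace ℝ P) (θ : EuclideanSpace ℝ P)
    (ω : Traj V S) : ℝ :=
  D ω.1 * ∏ s : Fin S, policy γ σ h θ s (pref ω s.val) (ω.2 s)

/-- Probability `P_θ(E)` of an event `E` over trajectories. -/
def Pr (D : List V → ℝ) (γ : ℝ) (σ : Fin J → List V → V)
    (h : Fin S → Fin J → EuclideanSpace ℝ P) (θ : EuclideanSpace ℝ P)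
    (E : Set (Traj V S)) : ℝ :=
  ∑' ω : Traj V S, Set.indicator E (dens D γ σ h θ) ω

/-- Conditional probability `P_θ(E | F)`. -/
def condPr (D : List V → ℝ) (γ : ℝ) (σ : Fin J → List V → V)
    (h : Fin S → Fin J → EuclideanSpace ℝ P) (θ : EuclideanSpace ℝ P)
    (E F : Set (Traj V S)) : ℝ :=
  Pr D γ σ h θ (E ∩ F) / Pr D γ σ h θ F

/-- The event `A_{s,j}` that task `σ_j` is selected at step `s`. -/
def Av (σ : Fin J → List V → V) (s : Fin S) (j : Fin J) : Set (Traj V S) :=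
  {ω | ω.2 s = σ j (pref ω s.val)}

/-- The event that the verifier accepts the final string. -/
def VE (Verif : List V → Bool) : Set (Traj V S) :=
  {ω | Verif (fullStr ω) = true}

/-- The task-advantage ratio `ρ^θ_{s,j} = P_θ(V=1 | A_{s,j}) / P_θ(V=1 | A_{s,j}ᶜ)`,
valued in `ℝ≥0∞` (so that a vanishing denominator yields `∞`, matching the paper's
conventions). -/
def ratio (D : List V → ℝ) (γ : ℝ) (σ : Fin J → List V → V)
    (h : Fin S → Fin J → EuclideanSpace ℝ P) (Verif : List V → Bool)
    (θ : EuclideanSpace ℝ P) (s : Fin S) (j : Fin J) : ℝ≥0∞ :=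
  ENNReal.ofReal (condPr D γ σ h θ (VE Verif) (Av σ s j)) /
    ENNReal.ofReal (condPr D γ σ h θ (VE Verif) ((Av σ s j)ᶜ))

/-- The REINFORCE parameter update
`θ' = θ + (η/B)·Σ_b Σ_s ∇_θ log π_θ(y_s^{(b)} | x_{s−1}^{(b)})` on a batch `bs`. -/
def update (γ : ℝ) (σ : Fin J → List V → V)
    (h : Fin S → Fin J → EuclideanSpace ℝ P) (η : ℝ)
    (θ : EuclideanSpace ℝ P) (bs : Fin Bsz → Traj V S) : EuclideanSpace ℝ P :=
  θ + (η / (Bsz : ℝ)) • ∑ b : Fin Bsz, ∑ s : Fin S,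
    gradient (fun θ' => Real.log (policy γ σ h θ' s (pref (bs b) s.val) ((bs b).2 s))) θ

/-- Density of a single trajectory of the training batch: a draw from `P_θ`
conditioned on the verifier accepting. -/
def condDens (D : List V → ℝ) (γ : ℝ) (σ : Fin J → List V → V)
    (h : Fin S → Fin J → EuclideanSpace ℝ P) (Verif : List V → Bool)
    (θ : EuclideanSpace ℝ P) (ω : Traj V S) : ℝ :=
  Set.indicator (VE Verif) (dens D γ σ h θ) ω / Pr D γ σ h θ (VE Verif)

/-- Expectation, over an i.i.d. batch of `Bsz` positive samples
(drawn from `P_θ(· | V = 1)`), of a function of the batch. -/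
def Ebatch (D : List V → ℝ) (γ : ℝ) (σ : Fin J → List V → V)
    (h : Fin S → Fin J → EuclideanSpace ℝ P) (Verif : List V → Bool)
    (θ : EuclideanSpace ℝ P) (F : (Fin Bsz → Traj V S) → ℝ) : ℝ :=
  ∑' bs : Fin Bsz → Traj V S, (∏ b : Fin Bsz, condDens D γ σ h Verif θ (bs b)) * F bs

/-- The empirical discrepancy
`Q_{s,j} = (1/B)·Σ_b (1[y_s^{(b)} = σ_j(x_{s−1}^{(b)})] − π_θ(σ_j(x_{s−1}^{(b)}) | x_{s−1}^{(b)}))`. -/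
def Q (γ : ℝ) (σ : Fin J → List V → V)
    (h : Fin S → Fin J → EuclideanSpace ℝ P) (θ : EuclideanSpace ℝ P)
    (bs : Fin Bsz → Traj V S) (s : Fin S) (j : Fin J) : ℝ :=
  (1 / (Bsz : ℝ)) * ∑ b : Fin Bsz,
    ((if (bs b).2 s = σ j (pref (bs b) s.val) then (1 : ℝ) else 0)
      - policy γ σ h θ s (pref (bs b) s.val) (σ j (pref (bs b) s.val)))

/-- The first `n` steps of the ground-truth chain of thought started at prompt `x0`:
apply `σ_{τ(1)}, …, σ_{τ(n)}` autoregressively. -/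
def fstarPref (σ : Fin J → List V → V) (τ : Fin S → Fin J) (x0 : List V)
    (n : ℕ) : List V :=
  ((List.finRange S).take n).foldl (fun acc s => acc ++ [σ (τ s) acc]) x0

/-- The target function `f*`: the full ground-truth chain of thought. -/
def fstar (σ : Fin J → List V → V) (τ : Fin S → Fin J) (x0 : List V) : List V :=
  fstarPref σ τ x0 S

/-- `P_θ(f*(x0) | x0)`: the probability of generating exactly the ground-truth
completion from prompt `x0` (chain rule of probability). -/
def targetProb (γ : ℝ) (σ : Fin J → List V → V)
    (h : Fin S → Fin J → EuclideanSpace ℝ P) (τ : Fin S → Fin J)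
    (θ : EuclideanSpace ℝ P) (x0 : List V) : ℝ :=
  ∏ s : Fin S, policy γ σ h θ s (fstarPref σ τ x0 s.val) (σ (τ s) (fstarPref σ τ x0 s.val))

/-- The cross-entropy loss `L(θ) = E_{x0∼D}[log(1/P_θ(f*(x0) | x0))]`. -/
def celoss (D : List V → ℝ) (γ : ℝ) (σ : Fin J → List V → V)
    (h : Fin S → Fin J → EuclideanSpace ℝ P) (τ : Fin S → Fin J)
    (θ : EuclideanSpace ℝ P) : ℝ :=
  ∑' x0 : List V, D x0 * Real.log (1 / targetProb γ σ h τ θ x0)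

/-- The training iterates: `θ^{(0)} = θ0` and
`θ^{(t+1)} = update(θ^{(t)}, batch t)`. -/
def thetaSeq (γ : ℝ) (σ : Fin J → List V → V)
    (h : Fin S → Fin J → EuclideanSpace ℝ P) (η : ℝ) (θ0 : EuclideanSpace ℝ P)
    (ω : ℕ → Fin Bsz → Traj V S) : ℕ → EuclideanSpace ℝ P
  | 0 => θ0
  | t + 1 => update γ σ h η (thetaSeq γ σ h η θ0 ω t) (ω t)

/-- Extension of a finite-horizon family of batches to all times. -/
def extendBatches (T : ℕ) (ωf : Fin T → Fin Bsz → Traj V S) :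
    ℕ → Fin Bsz → Traj V S :=
  fun t => if ht : t < T then ωf ⟨t, ht⟩ else fun _ => ([], fun _ => Classical.arbitrary V)

/-- Density of the whole training run over horizon `T`: at each iteration `t` the
batch is drawn i.i.d. from `P_{θ^{(t)}}(· | V = 1)`. -/
def trainDens (D : List V → ℝ) (γ : ℝ) (σ : Fin J → List V → V)
    (h : Fin S → Fin J → EuclideanSpace ℝ P) (Verif : List V → Bool) (η : ℝ)
    (θ0 : EuclideanSpace ℝ P) (T : ℕ) (ωf : Fin T → Fin Bsz → Traj V S) : ℝ :=
  ∏ t : Fin T, ∏ b : Fin Bsz,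
    condDens D γ σ h Verif (thetaSeq γ σ h η θ0 (extendBatches T ωf) t.val) (ωf t b)

/-- Probability, over the training randomness up to horizon `T`, of an event on the
batches. -/
def PrTrain (D : List V → ℝ) (γ : ℝ) (σ : Fin J → List V → V)
    (h : Fin S → Fin J → EuclideanSpace ℝ P) (Verif : List V → Bool) (η : ℝ)
    (θ0 : EuclideanSpace ℝ P) (T : ℕ)
    (E : Set (Fin T → Fin Bsz → Traj V S)) : ℝ :=
  ∑' ωf : Fin T → Fin Bsz → Traj V S,
    Set.indicator E (trainDens D γ σ h Verif η θ0 T) ωf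

end RLVR

section Aux

open RLVR

variable {V : Type*} [Fintype V] [DecidableEq V] [Nonempty V]
variable {P : Type*} [Fintype P]
variable {J S : ℕ}

/-- The prefix-independent per-step selection probability. -/
def pc (V : Type*) [Fintype V] {P : Type*} [Fintype P] {J S : ℕ} (γ : ℝ) (h : Fin S → Fin J → EuclideanSpace ℝ P)
    (θ : EuclideanSpace ℝ P) (s : Fin S) (j : Fin J) : ℝ :=
  Real.exp (γ * ⟪h s j, θ⟫) /
    (∑ j' : Fin J, (Real.exp (γ * ⟪h s j', θ⟫) - 1) + Fintype.card V)

lemma model_sigma {γ : ℝ} {σ : Fin J → List V → V}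
    (hσ : ∀ j j' : Fin J, j ≠ j' → ∀ x : List V, σ j x ≠ σ j' x)
    (h : Fin S → Fin J → EuclideanSpace ℝ P) (θ : EuclideanSpace ℝ P)
    (s : Fin S) (x : List V) (j : Fin J) :
    model γ σ h θ s x (σ j x) = γ * ⟪h s j, θ⟫ := by
  unfold model
  rw [Finset.sum_eq_single j]
  · simp
  · intro j' _ hj'
    rw [if_neg (hσ j' j hj' x), zero_mul]
  · simp

lemma model_nonsigma {γ : ℝ} {σ : Fin J → List V → V}
    (h : Fin S → Fin J → EuclideanSpace ℝ P) (θ : EuclideanSpace ℝ P)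
    (s : Fin S) (x : List V) (v : V) (hv : ∀ j : Fin J, σ j x ≠ v) :
    model γ σ h θ s x v = 0 := by
  unfold model
  refine Finset.sum_eq_zero fun j _ => ?_
  rw [if_neg (hv j), zero_mul]

lemma denom_eq {γ : ℝ} {σ : Fin J → List V → V}
    (hσ : ∀ j j' : Fin J, j ≠ j' → ∀ x : List V, σ j x ≠ σ j' x)
    (h : Fin S → Fin J → EuclideanSpace ℝ P) (θ : EuclideanSpace ℝ P)
    (s : Fin S) (x : List V) :
    ∑ w, Real.exp (model γ σ h θ s x w)
      = ∑ j' : Fin J, (Real.exp (γ * ⟪h s j', θ⟫) - 1) + Fintype.card V := by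
  have h1 : ∑ w, Real.exp (model γ σ h θ s x w)
      = ∑ w, ((Real.exp (model γ σ h θ s x w) - 1) + 1) := by
    refine Finset.sum_congr rfl fun w _ => by ring
  rw [h1, Finset.sum_add_distrib, Finset.sum_const, Finset.card_univ, nsmul_eq_mul, mul_one]
  congr 1
  calc ∑ w : V, (Real.exp (model γ σ h θ s x w) - 1)
      = ∑ w ∈ (Finset.univ : Finset (Fin J)).image (fun j => σ j x),
          (Real.exp (model γ σ h θ s x w) - 1) := by
        refine (Finset.sum_subset (Finset.subset_univ _) ?_).symm
        intro w _ hw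
        rw [model_nonsigma h θ s x w, Real.exp_zero, sub_self]
        intro j hj
        exact hw (Finset.mem_image.mpr ⟨j, Finset.mem_univ j, hj⟩)
    _ = ∑ j' : Fin J, (Real.exp (model γ σ h θ s x (σ j' x)) - 1) :=
        Finset.sum_image (fun a _ b _ hab => by
          by_contra hne
          exact hσ a b hne x hab)
    _ = ∑ j' : Fin J, (Real.exp (γ * ⟪h s j', θ⟫) - 1) := by
        refine Finset.sum_congr rfl fun j' _ => ?_
        rw [model_sigma hσ]

lemma denom_pos (γ : ℝ) (σ : Fin J → List V → V)
    (h : Fin S → Fin J → EuclideanSpace ℝ P) (θ : EuclideanSpace ℝ P)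
    (s : Fin S) (x : List V) :
    0 < ∑ w, Real.exp (model γ σ h θ s x w) :=
  Finset.sum_pos (fun w _ => Real.exp_pos _) Finset.univ_nonempty

lemma policy_sigma {γ : ℝ} {σ : Fin J → List V → V}
    (hσ : ∀ j j' : Fin J, j ≠ j' → ∀ x : List V, σ j x ≠ σ j' x)
    (h : Fin S → Fin J → EuclideanSpace ℝ P) (θ : EuclideanSpace ℝ P)
    (s : Fin S) (x : List V) (j : Fin J) :
    policy γ σ h θ s x (σ j x) = pc V γ h θ s j := by
  unfold policy softmax pc
  rw [model_sigma hσ, denom_eq hσ]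

lemma pc_pos {γ : ℝ} (σ : Fin J → List V → V)
    (hσ : ∀ j j' : Fin J, j ≠ j' → ∀ x : List V, σ j x ≠ σ j' x)
    (h : Fin S → Fin J → EuclideanSpace ℝ P) (θ : EuclideanSpace ℝ P)
    (s : Fin S) (j : Fin J) : 0 < pc V γ h θ s j := by
  rw [← policy_sigma hσ h θ s [] j]
  exact div_pos (Real.exp_pos _) (denom_pos γ σ h θ s [])

lemma policy_pos (γ : ℝ) (σ : Fin J → List V → V)
    (h : Fin S → Fin J → EuclideanSpace ℝ P) (θ : EuclideanSpace ℝ P)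
    (s : Fin S) (x : List V) (v : V) : 0 < policy γ σ h θ s x v :=
  div_pos (Real.exp_pos _) (denom_pos γ σ h θ s x)

lemma policy_le_one (γ : ℝ) (σ : Fin J → List V → V)
    (h : Fin S → Fin J → EuclideanSpace ℝ P) (θ : EuclideanSpace ℝ P)
    (s : Fin S) (x : List V) (v : V) : policy γ σ h θ s x v ≤ 1 := by
  unfold policy softmax
  rw [div_le_one (denom_pos γ σ h θ s x)]
  exact Finset.single_le_sum (fun w _ => (Real.exp_pos _).le) (Finset.mem_univ v)

lemma sum_policy (γ : ℝ) (σ : Fin J → List V → V)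
    (h : Fin S → Fin J → EuclideanSpace ℝ P) (θ : EuclideanSpace ℝ P)
    (s : Fin S) (x : List V) : ∑ v, policy γ σ h θ s x v = 1 := by
  unfold policy softmax
  rw [← Finset.sum_div, div_self (denom_pos γ σ h θ s x).ne']

lemma sum_cons {n : ℕ} (F : (Fin (n+1) → V) → ℝ) :
    ∑ y : Fin (n+1) → V, F y = ∑ v : V, ∑ ys : Fin n → V, F (Fin.cons v ys) := by
  rw [← Equiv.sum_comp (Fin.consEquiv (fun _ : Fin (n+1) => V)) F, Fintype.sum_prod_type]
  rfl

lemma ofFn_cons {n : ℕ} (v : V) (ys : Fin n → V) :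
    List.ofFn (Fin.cons v ys : Fin (n+1) → V) = v :: List.ofFn ys := by
  rw [List.ofFn_succ]; simp

lemma prod_cons_shift {n : ℕ} (π : ℕ → List V → V → ℝ) (x0 : List V)
    (v : V) (ys : Fin n → V) :
    (∏ i : Fin (n+1), π i.val
        (x0 ++ (List.ofFn (Fin.cons v ys : Fin (n+1) → V)).take i.val)
        ((Fin.cons v ys : Fin (n+1) → V) i))
    = π 0 x0 v * ∏ i : Fin n,
        (fun m => π (m+1)) i.val ((x0 ++ [v]) ++ (List.ofFn ys).take i.val) (ys i) := by
  rw [Fin.prod_univ_succ]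
  congr 1
  · simp
  · refine Finset.prod_congr rfl fun i _ => ?_
    rw [ofFn_cons, Fin.cons_succ]
    have hv : (Fin.succ i).val = i.val + 1 := rfl
    rw [hv, List.take_succ_cons, ← List.append_cons]

/-- Chain rule, part 1: the total probability of all length-`n` continuations is 1. -/
lemma sum_prod_pi_one (n : ℕ) (π : ℕ → List V → V → ℝ)
    (hπ : ∀ m x, ∑ v, π m x v = 1) (x0 : List V) :
    ∑ y : Fin n → V, ∏ i : Fin n, π i.val (x0 ++ (List.ofFn y).take i.val) (y i) = 1 := by
  induction n generalizing π x0 with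
  | zero => simp
  | succ n ih =>
    rw [sum_cons]
    have : ∀ v : V, ∑ ys : Fin n → V,
        (∏ i : Fin (n+1), π i.val
          (x0 ++ (List.ofFn (Fin.cons v ys : Fin (n+1) → V)).take i.val)
          ((Fin.cons v ys : Fin (n+1) → V) i)) = π 0 x0 v := by
      intro v
      simp only [prod_cons_shift]
      rw [← Finset.mul_sum, ih (fun m => π (m+1)) (fun m x => hπ (m+1) x) (x0 ++ [v]),
        mul_one]
    simp only [this]
    exact hπ 0 x0

/-- Chain rule, part 2: the probability of selecting `g` at step `s` is the constant `p`. -/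
lemma sum_prod_pi_sel (n : ℕ) (π : ℕ → List V → V → ℝ)
    (hπ : ∀ m x, ∑ v, π m x v = 1) (g : List V → V) (p : ℝ) (s : Fin n)
    (hp : ∀ x, π s.val x (g x) = p) (x0 : List V) :
    ∑ y : Fin n → V, (if y s = g (x0 ++ (List.ofFn y).take s.val) then (1:ℝ) else 0)
      * ∏ i : Fin n, π i.val (x0 ++ (List.ofFn y).take i.val) (y i) = p := by
  induction n generalizing π x0 with
  | zero => exact s.elim0
  | succ n ih =>
    rw [sum_cons]
    induction s using Fin.cases with
    | zero =>
      have key : ∀ v : V, ∑ ys : Fin n → V,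
          (if (Fin.cons v ys : Fin (n+1) → V) 0
              = g (x0 ++ (List.ofFn (Fin.cons v ys : Fin (n+1) → V)).take (0:Fin (n+1)).val)
            then (1:ℝ) else 0)
          * ∏ i : Fin (n+1), π i.val
              (x0 ++ (List.ofFn (Fin.cons v ys : Fin (n+1) → V)).take i.val)
              ((Fin.cons v ys : Fin (n+1) → V) i)
          = (if v = g x0 then (1:ℝ) else 0) * π 0 x0 v := by
        intro v
        have hind : ∀ ys : Fin n → V,
            (if (Fin.cons v ys : Fin (n+1) → V) 0
                = g (x0 ++ (List.ofFn (Fin.cons v ys : Fin (n+1) → V)).take (0:Fin (n+1)).val)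
              then (1:ℝ) else 0) = (if v = g x0 then (1:ℝ) else 0) := by
          intro ys
          simp
        simp only [hind, prod_cons_shift, ← mul_assoc]
        rw [← Finset.mul_sum,
          sum_prod_pi_one n (fun m => π (m+1)) (fun m x => hπ (m+1) x) (x0 ++ [v]), mul_one]
      simp only [key]
      have h0 : ((0 : Fin (n+1)) : ℕ) = 0 := rfl
      calc ∑ v, (if v = g x0 then (1:ℝ) else 0) * π 0 x0 v
          = ∑ v, (if v = g x0 then π 0 x0 v else 0) := by
            refine Finset.sum_congr rfl fun v _ => ?_
            split <;> simp
        _ = π 0 x0 (g x0) := by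
            rw [Finset.sum_ite_eq' Finset.univ (g x0) (fun v => π 0 x0 v),
              if_pos (Finset.mem_univ _)]
        _ = p := hp x0
    | succ i =>
      have key : ∀ v : V, ∑ ys : Fin n → V,
          (if (Fin.cons v ys : Fin (n+1) → V) i.succ
              = g (x0 ++ (List.ofFn (Fin.cons v ys : Fin (n+1) → V)).take (i.succ : Fin (n+1)).val)
            then (1:ℝ) else 0)
          * ∏ j : Fin (n+1), π j.val
              (x0 ++ (List.ofFn (Fin.cons v ys : Fin (n+1) → V)).take j.val)
              ((Fin.cons v ys : Fin (n+1) → V) j)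
          = π 0 x0 v * p := by
        intro v
        have hind : ∀ ys : Fin n → V,
            (if (Fin.cons v ys : Fin (n+1) → V) i.succ
                = g (x0 ++ (List.ofFn (Fin.cons v ys : Fin (n+1) → V)).take (i.succ : Fin (n+1)).val)
              then (1:ℝ) else 0)
            = (if ys i = g ((x0 ++ [v]) ++ (List.ofFn ys).take i.val) then (1:ℝ) else 0) := by
          intro ys
          rw [ofFn_cons, Fin.cons_succ]
          have hv : (Fin.succ i).val = i.val + 1 := rfl
          rw [hv, List.take_succ_cons, ← List.append_cons]
        simp only [hind, prod_cons_shift]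
        have : ∀ ys : Fin n → V,
            (if ys i = g ((x0 ++ [v]) ++ (List.ofFn ys).take i.val) then (1:ℝ) else 0)
            * (π 0 x0 v * ∏ j : Fin n,
                (fun m => π (m+1)) j.val ((x0 ++ [v]) ++ (List.ofFn ys).take j.val) (ys j))
            = π 0 x0 v * ((if ys i = g ((x0 ++ [v]) ++ (List.ofFn ys).take i.val) then (1:ℝ) else 0)
              * ∏ j : Fin n,
                (fun m => π (m+1)) j.val ((x0 ++ [v]) ++ (List.ofFn ys).take j.val) (ys j)) := by
          intro ys; ring
        simp only [this]
        rw [← Finset.mul_sum,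
          ih (fun m => π (m+1)) (fun m x => hπ (m+1) x) i (fun x => hp x) (x0 ++ [v])]
      simp only [key]
      rw [← Finset.sum_mul, hπ 0 x0, one_mul]

end Aux

section Main

open RLVR

variable {V : Type*} [Fintype V] [DecidableEq V] [Nonempty V]
variable {P : Type*} [Fintype P]
variable {J S : ℕ}

/-- Extension of the per-step policy to all positions. -/
def piExt (γ : ℝ) (σ : Fin J → List V → V) (h : Fin S → Fin J → EuclideanSpace ℝ P)
    (θ : EuclideanSpace ℝ P) : ℕ → List V → V → ℝ :=
  fun m x v => if hm : m < S then policy γ σ h θ ⟨m, hm⟩ x v else (Fintype.card V : ℝ)⁻¹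

lemma piExt_lt (γ : ℝ) (σ : Fin J → List V → V) (h : Fin S → Fin J → EuclideanSpace ℝ P)
    (θ : EuclideanSpace ℝ P) (i : Fin S) (x : List V) (v : V) :
    piExt γ σ h θ i.val x v = policy γ σ h θ i x v := by
  simp [piExt]

lemma piExt_sum (γ : ℝ) (σ : Fin J → List V → V) (h : Fin S → Fin J → EuclideanSpace ℝ P)
    (θ : EuclideanSpace ℝ P) (m : ℕ) (x : List V) :
    ∑ v, piExt γ σ h θ m x v = 1 := by
  unfold piExt
  split
  · exact sum_policy γ σ h θ _ x
  · rw [Finset.sum_const, Finset.card_univ, nsmul_eq_mul,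
      mul_inv_cancel₀ (Nat.cast_ne_zero.mpr Fintype.card_ne_zero)]

lemma dens_nonneg {D : List V → ℝ} (hD0 : ∀ x, 0 ≤ D x) (γ : ℝ) (σ : Fin J → List V → V)
    (h : Fin S → Fin J → EuclideanSpace ℝ P) (θ : EuclideanSpace ℝ P) (ω : Traj V S) :
    0 ≤ dens D γ σ h θ ω :=
  mul_nonneg (hD0 _) (Finset.prod_nonneg fun i _ => (policy_pos γ σ h θ i _ _).le)

lemma inner_sum_eq {γ : ℝ} {σ : Fin J → List V → V}
    (hσ : ∀ j j' : Fin J, j ≠ j' → ∀ x : List V, σ j x ≠ σ j' x)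
    (h : Fin S → Fin J → EuclideanSpace ℝ P) (θ : EuclideanSpace ℝ P)
    (D : List V → ℝ) (s : Fin S) (j : Fin J) (x0 : List V) :
    ∑ y : Fin S → V, Set.indicator (Av σ s j) (dens D γ σ h θ) (x0, y)
      = D x0 * pc V γ h θ s j := by
  have hω : ∀ y : Fin S → V, Set.indicator (Av σ s j) (dens D γ σ h θ) (x0, y)
      = D x0 * ((if y s = σ j (x0 ++ (List.ofFn y).take s.val) then (1:ℝ) else 0)
        * ∏ i : Fin S, piExt γ σ h θ i.val (x0 ++ (List.ofFn y).take i.val) (y i)) := by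
    intro y
    have hdens : dens D γ σ h θ (x0, y)
        = D x0 * ∏ i : Fin S, piExt γ σ h θ i.val (x0 ++ (List.ofFn y).take i.val) (y i) := by
      unfold dens
      congr 1
      exact Finset.prod_congr rfl fun i _ => (piExt_lt γ σ h θ i _ _).symm
    classical
    rw [Set.indicator_apply]
    by_cases hc : y s = σ j (x0 ++ (List.ofFn y).take s.val)
    · rw [if_pos hc, if_pos, hdens, one_mul]
      exact hc
    · rw [if_neg hc, if_neg, zero_mul, mul_zero]
      exact hc
  simp only [hω]
  rw [← Finset.mul_sum]
  congr 1
  exact sum_prod_pi_sel S (piExt γ σ h θ) (piExt_sum γ σ h θ) (fun x => σ j x)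
    (pc V γ h θ s j) s
    (fun x => by rw [piExt_lt γ σ h θ s x (σ j x)]; exact policy_sigma hσ h θ s x j) x0

lemma Pr_Av {γ : ℝ} {σ : Fin J → List V → V}
    (hσ : ∀ j j' : Fin J, j ≠ j' → ∀ x : List V, σ j x ≠ σ j' x)
    (h : Fin S → Fin J → EuclideanSpace ℝ P) (θ : EuclideanSpace ℝ P)
    (D : List V → ℝ) (hD0 : ∀ x, 0 ≤ D x) (hD1 : ∑' x : List V, D x = 1)
    (s : Fin S) (j : Fin J) :
    Pr D γ σ h θ (Av σ s j) = pc V γ h θ s j := by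
  have hDsum : Summable D := by
    by_contra hns
    rw [tsum_eq_zero_of_not_summable hns] at hD1
    exact one_ne_zero hD1.symm
  set f : Traj V S → ℝ := Set.indicator (Av σ s j) (dens D γ σ h θ) with hf
  have hfib : ∀ x0 : List V, Summable fun y : Fin S → V => f (x0, y) :=
    fun x0 => Summable.of_finite
  have htot : ∀ x0 : List V, ∑' y : Fin S → V, f (x0, y) = D x0 * pc V γ h θ s j := by
    intro x0
    rw [tsum_fintype]
    exact inner_sum_eq hσ h θ D s j x0
  have hsum : Summable f := by
    rw [summable_prod_of_nonneg]
    · refine ⟨hfib, ?_⟩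
      have : (fun x0 => ∑' y : Fin S → V, f (x0, y))
          = fun x0 => D x0 * pc V γ h θ s j := funext htot
      rw [this]
      exact hDsum.mul_right _
    · intro p
      exact Set.indicator_nonneg (fun ω _ => dens_nonneg hD0 γ σ h θ ω) p
  calc Pr D γ σ h θ (Av σ s j) = ∑' x0 : List V, ∑' y : Fin S → V, f (x0, y) :=
        Summable.tsum_prod' hsum hfib
    _ = ∑' x0 : List V, D x0 * pc V γ h θ s j := by
        exact tsum_congr htot
    _ = pc V γ h θ s j := by rw [tsum_mul_right, hD1, one_mul]

lemma celoss_eq {γ : ℝ} {σ : Fin J → List V → V}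
    (hσ : ∀ j j' : Fin J, j ≠ j' → ∀ x : List V, σ j x ≠ σ j' x)
    (h : Fin S → Fin J → EuclideanSpace ℝ P) (θ : EuclideanSpace ℝ P)
    (D : List V → ℝ) (hD1 : ∑' x : List V, D x = 1) (τ : Fin S → Fin J) :
    celoss D γ σ h τ θ = Real.log (1 / ∏ s : Fin S, pc V γ h θ s (τ s)) := by
  have htp : ∀ x0 : List V, targetProb γ σ h τ θ x0 = ∏ s : Fin S, pc V γ h θ s (τ s) := by
    intro x0
    exact Finset.prod_congr rfl fun s _ => policy_sigma hσ h θ s _ (τ s)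
  unfold celoss
  simp only [htp]
  rw [tsum_mul_right, hD1, one_mul]

end Main

open RLVR in
/-- Lemma A.9 of the paper. At every iteration `t` (surely, for any
realization `ω` of the training batches), the cross-entropy loss is bounded by the sum
of the error ratios:
`L^{(t)} ≤ Σ_{s=1}^S (1/P_t(A_{s,τ(s)}) − 1)`. -/
theorem stmt7 {V : Type*} [Fintype V] [DecidableEq V] [Nonempty V]
    {P : Type*} [Fintype P] {J S Bsz : ℕ}
    (hS : 0 < S) (hJ : 0 < J) (hBsz : 0 < Bsz)
    (γ η : ℝ) (hγ : 0 < γ) (hη : 0 < η)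
    (σ : Fin J → List V → V)
    (hσ : ∀ j j' : Fin J, j ≠ j' → ∀ x : List V, σ j x ≠ σ j' x)
    (h : Fin S → Fin J → EuclideanSpace ℝ P)
    (hh : Orthonormal ℝ fun sj : Fin S × Fin J => h sj.1 sj.2)
    (D : List V → ℝ) (hD0 : ∀ x, 0 ≤ D x) (hD1 : ∑' x : List V, D x = 1)
    (Verif : List V → Bool) (τ : Fin S → Fin J)
    (hA1 : ∀ x0 : List V, 0 < D x0 → Verif (fstar σ τ x0) = true)
    (θ0 : EuclideanSpace ℝ P) :
    ∀ (ω : ℕ → Fin Bsz → Traj V S) (t : ℕ),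
      celoss D γ σ h τ (thetaSeq γ σ h η θ0 ω t)
        ≤ ∑ s : Fin S,
            (1 / Pr D γ σ h (thetaSeq γ σ h η θ0 ω t) (Av σ s (τ s)) - 1) := by
  intro ω t
  set θ := thetaSeq γ σ h η θ0 ω t with hθ
  have hpos : ∀ s : Fin S, 0 < pc V γ h θ s (τ s) := fun s => pc_pos σ hσ h θ s (τ s)
  rw [celoss_eq hσ h θ D hD1 τ]
  have hlog : Real.log (1 / ∏ s : Fin S, pc V γ h θ s (τ s))
      = ∑ s : Fin S, Real.log (pc V γ h θ s (τ s))⁻¹ := by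
    rw [one_div, ← Finset.prod_inv_distrib,
      Real.log_prod (fun s _ => (inv_pos.mpr (hpos s)).ne')]
  rw [hlog]
  refine Finset.sum_le_sum fun s _ => ?_
  rw [Pr_Av hσ h θ D hD0 hD1 s (τ s), one_div]
  have := Real.log_le_sub_one_of_pos (inv_pos.mpr (hpos s))
  linarith
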